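/- If an undirected graph G with a designated edge e has a cycle basis in which every basis cycle contains e, then the subgraph of G consisting of all vertices and edges lying on cycles (the 2-core, assuming G equals its 2-core) is 2-vertex-connected. -/

import Mathlib

open SimpleGraph

/-- A cycle in `G`: a (finite) connected `2`-regular subgraph. -/
def IsCycleSubgraph {V : Type*} {G : SimpleGraph V} (C : G.Subgraph) : Prop :=
  C.verts.Finite ∧ C.Connected ∧ ∀ v ∈ C.verts, (C.neighborSet v).ncard = 2

open Classical in
/-- The characteristic vector over `𝔽₂` of the edge set of a subgraph. -/
noncomputable def edgeVec {V : Type*} {G : SimpleGraph V} (C : G.Subgraph) :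
    Sym2 V → ZMod 2 :=
  fun e => if e ∈ C.edgeSet then 1 else 0

/-- The cycle space of `G`: the `𝔽₂`-span of the edge vectors of cycles of `G`. -/
noncomputable def cycleSpace {V : Type*} (G : SimpleGraph V) :
    Submodule (ZMod 2) (Sym2 V → ZMod 2) :=
  Submodule.span (ZMod 2) (edgeVec '' {C : G.Subgraph | IsCycleSubgraph C})

/-- A cycle basis of `G`: a set of cycles whose edge vectors form a basis of the
cycle space of `G`. -/
def IsCycleBasis {V : Type*} {G : SimpleGraph V} (B : Set G.Subgraph) : Prop :=
  (∀ C ∈ B, IsCycleSubgraph C) ∧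
  LinearIndependent (ZMod 2) (fun C : B => edgeVec C.1) ∧
  Submodule.span (ZMod 2) (edgeVec '' B) = cycleSpace G

/-- A graph is `2`-vertex-connected if it has at least three vertices and deleting
any single vertex leaves it connected. -/
def TwoConnected {V : Type*} (G : SimpleGraph V) : Prop :=
  3 ≤ Nat.card V ∧ ∀ v : V, (G.induce ({v}ᶜ : Set V)).Connected

section Aux
variable {V : Type*} [Fintype V] {G : SimpleGraph V}

lemma aux_sum_comm [DecidableEq V] (s : Finset V) (t : Finset (Sym2 V)) :
    ∑ x ∈ s, (t.filter (fun e => x ∈ e)).card = ∑ e ∈ t, (s.filter (fun x => x ∈ e)).card := by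
  simp_rw [Finset.card_filter]
  exact Finset.sum_comm

lemma aux_incidence [DecidableEq V] (C : G.Subgraph) (x : V) :
    ((Set.toFinite C.edgeSet).toFinset.filter (fun e => x ∈ e)).card
      = (C.neighborSet x).ncard := by
  have himg : (Set.toFinite C.edgeSet).toFinset.filter (fun e => x ∈ e)
      = (Set.toFinite (C.neighborSet x)).toFinset.image (fun n => s(x, n)) := by
    ext e
    simp only [Finset.mem_filter, Set.Finite.mem_toFinset, Finset.mem_image]
    constructor
    · rintro ⟨he, hx⟩
      induction e with
      | _ a b =>
        rw [Sym2.mem_iff] at hx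
        rw [Subgraph.mem_edgeSet] at he
        rcases hx with rfl | rfl
        · exact ⟨b, he, rfl⟩
        · exact ⟨a, he.symm, Sym2.eq_swap⟩
    · rintro ⟨n, hn, rfl⟩
      exact ⟨Subgraph.mem_edgeSet.2 hn, Sym2.mem_mk_left _ _⟩
  rw [himg, Finset.card_image_of_injective _ (fun a b h => Sym2.congr_right.1 h),
    Set.ncard_eq_toFinset_card _ (Set.toFinite _)]

lemma aux_pair_filter [DecidableEq V] {C : G.Subgraph} {a b : V} (hab : C.Adj a b)
    (s : Finset V) :
    s.filter (fun x => x ∈ s(a, b)) = (s.filter (fun x => x = a)) ∪ (s.filter (fun x => x = b)) := by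
  ext z
  simp only [Finset.mem_filter, Finset.mem_union, Sym2.mem_iff]
  tauto

lemma aux_two_endpoints [DecidableEq V] {C : G.Subgraph} {a b : V} (hab : C.Adj a b)
    (s : Finset V) (ha : a ∈ s) (hb : b ∈ s) :
    (s.filter (fun x => x ∈ s(a, b))).card = 2 := by
  rw [aux_pair_filter hab s]
  rw [Finset.filter_eq', Finset.filter_eq', if_pos ha, if_pos hb]
  rw [Finset.card_union_of_disjoint (by simp [Finset.disjoint_singleton, (C.adj_sub hab).ne', (C.adj_sub hab).ne])]
  simp

lemma aux_filter_card_le_two [DecidableEq V] (e : Sym2 V) (s : Finset V) :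
    (s.filter (fun x => x ∈ e)).card ≤ 2 := by
  induction e with
  | _ a b =>
    have : s.filter (fun x => x ∈ s(a, b)) ⊆ {a, b} := by
      intro z hz
      simp only [Finset.mem_filter, Sym2.mem_iff] at hz
      simp [hz.2]
    exact (Finset.card_le_card this).trans (Finset.card_insert_le _ _ |>.trans (by simp))

lemma aux_handshake [DecidableEq V] (C : G.Subgraph) :
    ∑ x ∈ (Set.toFinite C.verts).toFinset, (C.neighborSet x).ncard
      = 2 * (Set.toFinite C.edgeSet).toFinset.card := by
  simp_rw [← aux_incidence]
  rw [aux_sum_comm]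
  have h2 : ∀ e ∈ (Set.toFinite C.edgeSet).toFinset,
      ((Set.toFinite C.verts).toFinset.filter (fun x => x ∈ e)).card = 2 := by
    intro e he
    simp only [Set.Finite.mem_toFinset] at he
    induction e with
    | _ a b =>
      rw [Subgraph.mem_edgeSet] at he
      exact aux_two_endpoints he _ ((Set.Finite.mem_toFinset _).2 (he.fst_mem))
        ((Set.Finite.mem_toFinset _).2 (he.snd_mem))
  rw [Finset.sum_congr rfl h2, Finset.sum_const, smul_eq_mul, mul_comm]


lemma aux_parity [DecidableEq V] (C : G.Subgraph)
    (hreg : ∀ x ∈ C.verts, (C.neighborSet x).ncard = 2) (Q : Set V) (hQ : Q ⊆ C.verts) :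
    2 ∣ ((Set.toFinite C.edgeSet).toFinset.filter
      (fun e => ((Set.toFinite Q).toFinset.filter (fun x => x ∈ e)).card = 1)).card := by
  set Qf := (Set.toFinite Q).toFinset with hQf
  set EF := (Set.toFinite C.edgeSet).toFinset with hEF
  have hsum : ∑ e ∈ EF, (Qf.filter (fun x => x ∈ e)).card = 2 * Qf.card := by
    rw [← aux_sum_comm]
    have h2 : ∀ x ∈ Qf, (EF.filter (fun e => x ∈ e)).card = 2 := by
      intro x hx
      rw [aux_incidence]
      exact hreg x (hQ ((Set.Finite.mem_toFinset _).1 hx))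
    rw [Finset.sum_congr rfl h2, Finset.sum_const, smul_eq_mul, mul_comm]
  have hsplit := Finset.sum_filter_add_sum_filter_not EF
    (fun e => (Qf.filter (fun x => x ∈ e)).card = 1) (fun e => (Qf.filter (fun x => x ∈ e)).card)
  have hone : ∑ e ∈ EF.filter (fun e => (Qf.filter (fun x => x ∈ e)).card = 1),
      (Qf.filter (fun x => x ∈ e)).card
      = (EF.filter (fun e => (Qf.filter (fun x => x ∈ e)).card = 1)).card := by
    rw [Finset.sum_congr rfl (fun e he => (Finset.mem_filter.1 he).2), Finset.sum_const,
      smul_eq_mul, mul_one]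
  have heven : 2 ∣ ∑ e ∈ EF.filter (fun e => ¬ (Qf.filter (fun x => x ∈ e)).card = 1),
      (Qf.filter (fun x => x ∈ e)).card := by
    apply Finset.dvd_sum
    intro e he
    have h1 := (Finset.mem_filter.1 he).2
    have h2 := aux_filter_card_le_two e Qf
    interval_cases h : (Qf.filter (fun x => x ∈ e)).card <;> omega
  rw [hone] at hsplit
  omega


lemma aux_walk_cross {W : Type*} {H : SimpleGraph W} (P : W → Prop) :
    ∀ {a b : W}, H.Walk a b → P a → ¬P b → ∃ x y, H.Adj x y ∧ P x ∧ ¬P y := by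
  intro a b p
  induction p with
  | nil => intro h h'; exact absurd h h'
  | @cons u w b h q ih =>
    intro ha hb
    by_cases hw : P w
    · exact ih hw hb
    · exact ⟨u, w, h, ha, hw⟩

lemma aux_subgraph_cross {C : G.Subgraph} (hC : C.Connected) {X : Set V} {a b : V}
    (ha : a ∈ C.verts) (hb : b ∈ C.verts) (hXa : a ∈ X) (hXb : b ∉ X) :
    ∃ x y, C.Adj x y ∧ x ∈ X ∧ y ∉ X := by
  obtain ⟨p⟩ := hC ⟨a, ha⟩ ⟨b, hb⟩
  obtain ⟨x, y, hxy, hx, hy⟩ := aux_walk_cross (fun u : C.verts => (u : V) ∈ X) p hXa hXb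
  exact ⟨x, y, hxy, hx, hy⟩

lemma aux_key_start [DecidableEq V] : ∀ (u : V) (d : G.Walk u u), d.IsCycle →
    ∃ w1 w2, w1 ≠ w2 ∧ d.toSubgraph.Adj u w1 ∧ d.toSubgraph.Adj u w2 := by
  intro u d hd
  cases d with
  | nil => exact absurd hd.three_le_length (by simp)
  | @cons _ w _ h p =>
    have hcyc := (Walk.cons_isCycle_iff p h).1 hd
    have hpnil : ¬ p.Nil := by
      have h3 := hd.three_le_length
      rw [Walk.length_cons] at h3
      rw [Walk.not_nil_iff_lt_length]; omega
    have hrnil : ¬ p.reverse.Nil := by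
      rw [Walk.not_nil_iff_lt_length, Walk.length_reverse]
      rw [Walk.not_nil_iff_lt_length] at hpnil; exact hpnil
    obtain ⟨w2, h2, p2, hp2⟩ := Walk.not_nil_iff.1 hrnil
    refine ⟨w, w2, ?_, ?_, ?_⟩
    · rintro rfl
      apply hcyc.2
      have hmem : s(u, w) ∈ p.reverse.edges := by rw [hp2]; simp
      rwa [Walk.edges_reverse, List.mem_reverse] at hmem
    · simp [Walk.toSubgraph]
    · have hadj : p.reverse.toSubgraph.Adj u w2 := by rw [hp2]; simp [Walk.toSubgraph]
      rw [Walk.toSubgraph_reverse] at hadj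
      exact Subgraph.sup_adj.2 (Or.inr hadj)

lemma aux_cycle_toSubgraph [DecidableEq V] {y : V} {c : G.Walk y y} (hc : c.IsCycle) :
    IsCycleSubgraph c.toSubgraph := by
  refine ⟨Set.toFinite _, c.toSubgraph_connected, ?_⟩
  have hge : ∀ u ∈ c.toSubgraph.verts, 2 ≤ (c.toSubgraph.neighborSet u).ncard := by
    intro u hu
    rw [Walk.mem_verts_toSubgraph] at hu
    obtain ⟨w1, w2, hne, h1, h2⟩ := aux_key_start u (c.rotate u hu) (hc.rotate hu)
    rw [c.toSubgraph_rotate hu] at h1 h2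
    have hlt : 1 < (c.toSubgraph.neighborSet u).ncard :=
      (Set.one_lt_ncard (Set.toFinite _)).2 ⟨w1, h1, w2, h2, hne⟩
    omega
  have hverts : (Set.toFinite c.toSubgraph.verts).toFinset = c.support.tail.toFinset := by
    ext z
    simp only [Set.Finite.mem_toFinset, Walk.mem_verts_toSubgraph, List.mem_toFinset]
    constructor
    · intro hz
      rw [c.support_eq_cons] at hz
      rcases List.mem_cons.1 hz with rfl | hmem
      · have hd : c.darts ≠ [] := by
          have h3 := hc.three_le_length
          intro hnil
          have hl := c.length_darts
          rw [hnil] at hl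
          simp at hl
          omega
        have hlast : (c.darts.getLast hd).snd = z := by simp
        rw [← c.map_snd_darts]
        exact List.mem_map.2 ⟨c.darts.getLast hd, List.getLast_mem hd, hlast⟩
      · exact hmem
    · intro hz
      rw [c.support_eq_cons]; exact List.mem_cons_of_mem _ hz
  have hvcard : (Set.toFinite c.toSubgraph.verts).toFinset.card = c.length := by
    rw [hverts, List.toFinset_card_of_nodup hc.support_nodup, List.length_tail,
      c.length_support]
    omega
  have hecard : (Set.toFinite c.toSubgraph.edgeSet).toFinset.card = c.length := by
    have hedges : (Set.toFinite c.toSubgraph.edgeSet).toFinset = c.edges.toFinset := by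
      ext e; simp [Walk.mem_edges_toSubgraph]
    rw [hedges, List.toFinset_card_of_nodup hc.isCircuit.isTrail.edges_nodup, c.length_edges]
  have hhs := aux_handshake c.toSubgraph
  intro x hx
  by_contra hne2
  have h3 : 3 ≤ (c.toSubgraph.neighborSet x).ncard := by
    have := hge x hx; omega
  have hlt : ∑ _u ∈ (Set.toFinite c.toSubgraph.verts).toFinset, 2
      < ∑ u ∈ (Set.toFinite c.toSubgraph.verts).toFinset, (c.toSubgraph.neighborSet u).ncard := by
    apply Finset.sum_lt_sum
    · intro i hi; exact hge i ((Set.Finite.mem_toFinset _).1 hi)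
    · exact ⟨x, (Set.Finite.mem_toFinset _).2 hx, by omega⟩
  rw [hhs, Finset.sum_const, smul_eq_mul, hvcard, hecard] at hlt
  omega

lemma aux_exists_cycle (S : Set V) (v : V)
    (hdeg : ∀ x ∈ S, x ≠ v → 2 ≤ (G.neighborSet x).ncard)
    (hclosed : ∀ x ∈ S, x ≠ v → G.neighborSet x ⊆ S)
    (b0 : V) (hb0 : b0 ∈ S) (hb0v : b0 ≠ v) :
    ∃ (n : V) (c : G.Walk n n), c.IsCycle ∧ (∀ w ∈ c.support, w ∈ S) ∧
      ∃ z ∈ c.support, z ≠ v ∧ z ∈ S := by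
  classical
  set L : Set ℕ := {n : ℕ | ∃ (x y : V) (p : G.Walk x y), p.IsPath ∧
    (∀ w ∈ p.support, w ∈ S) ∧ n = p.length} with hL
  have h0 : (0 : ℕ) ∈ L := ⟨b0, b0, Walk.nil, by simp, by simp [hb0], by simp⟩
  have hbdd : BddAbove L := by
    refine ⟨Fintype.card V, fun n hn => ?_⟩
    obtain ⟨x, y, p, hp, -, rfl⟩ := hn
    exact le_of_lt hp.length_lt
  have hN : sSup L ∈ L := Nat.sSup_mem ⟨0, h0⟩ hbdd
  set N := sSup L with hNdef
  obtain ⟨x, y, p, hp, hsupp, hlen⟩ := hN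
  have hN1 : 1 ≤ N := by
    have hnb : (G.neighborSet b0).Nonempty := by
      apply Set.nonempty_of_ncard_ne_zero
      have := hdeg b0 hb0 hb0v; omega
    obtain ⟨z, (hz : G.Adj b0 z)⟩ := hnb
    have h1L : (1 : ℕ) ∈ L := by
      refine ⟨b0, z, Walk.cons hz Walk.nil, ?_, ?_, by simp⟩
      · rw [Walk.cons_isPath_iff]
        simp [hz.ne]
      · intro w hw
        simp only [Walk.support_cons, Walk.support_nil, List.mem_cons, List.mem_singleton] at hw
        rcases hw with rfl | rfl | h
        · exact hb0
        · exact hclosed b0 hb0 hb0v hz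
        · simp at h
    exact le_csSup hbdd h1L
  have hxy : x ≠ y := by
    rintro rfl
    cases p with
    | nil => simp at hlen; omega
    | cons h q =>
      rw [Walk.cons_isPath_iff] at hp
      exact hp.2 q.end_mem_support
  obtain ⟨a, z, q, hq, hqs, hqlen, hzv⟩ : ∃ (a z : V) (q : G.Walk a z), q.IsPath ∧
      (∀ w ∈ q.support, w ∈ S) ∧ q.length = N ∧ z ≠ v := by
    by_cases hyv : y = v
    · exact ⟨y, x, p.reverse, hp.reverse, fun w hw => hsupp w (by
        rwa [Walk.support_reverse, List.mem_reverse] at hw), by simp [hlen], by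
        rintro rfl; exact hxy hyv.symm⟩
    · exact ⟨x, y, p, hp, hsupp, hlen.symm, hyv⟩
  have hzS : z ∈ S := hqs z q.end_mem_support
  have hallin : ∀ m ∈ G.neighborSet z, m ∈ q.support := by
    intro m hm
    by_contra hnot
    have hmS : m ∈ S := hclosed z hzS hzv hm
    have hNL : N + 1 ∈ L := by
      refine ⟨m, a, Walk.cons hm.symm q.reverse, ?_, ?_, by simp [hqlen]⟩
      · rw [Walk.cons_isPath_iff]
        refine ⟨hq.reverse, ?_⟩
        rwa [Walk.support_reverse, List.mem_reverse]
      · intro w hw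
        simp only [Walk.support_cons, List.mem_cons] at hw
        rcases hw with rfl | hw
        · exact hmS
        · rw [Walk.support_reverse, List.mem_reverse] at hw
          exact hqs w hw
    have := le_csSup hbdd hNL
    omega
  have h2 : 1 < (G.neighborSet z).ncard := hdeg z hzS hzv
  obtain ⟨n1, hn1, n2, hn2, hne12⟩ := (Set.one_lt_ncard (Set.toFinite _)).1 h2
  have hqrnil : ¬ q.reverse.Nil := by
    rw [Walk.not_nil_iff_lt_length, Walk.length_reverse]
    omega
  obtain ⟨w, hw, q2, hq2⟩ := Walk.not_nil_iff.1 hqrnil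
  set n := if n1 = w then n2 else n1 with hn
  have hzn : G.Adj z n := by
    rw [hn]
    by_cases h : n1 = w
    · rw [if_pos h]; exact hn2
    · rw [if_neg h]; exact hn1
  have hnw : n ≠ w := by
    rw [hn]
    by_cases h : n1 = w
    · rw [if_pos h]; rintro rfl; exact hne12 h
    · rw [if_neg h]; exact h
  have hnz : n ≠ z := hzn.ne'
  have hnsupp : n ∈ q.reverse.support := by
    rw [Walk.support_reverse, List.mem_reverse]
    exact hallin n hzn
  set r := q.reverse.takeUntil n hnsupp with hr
  have hrp : r.IsPath := hq.reverse.takeUntil hnsupp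
  have hedge : s(n, z) ∉ r.edges := by
    intro hmem
    have hmem2 : s(n, z) ∈ q.reverse.edges := q.reverse.edges_takeUntil_subset hnsupp hmem
    rw [hq2] at hmem2
    simp only [Walk.edges_cons, List.mem_cons] at hmem2
    rcases hmem2 with heq | hmem2
    · rw [Sym2.eq_iff] at heq
      rcases heq with ⟨h1, h2⟩ | ⟨h1, h2⟩
      · exact hnz h1
      · exact hnw h1
    · have hzsupp : z ∈ q2.support := q2.snd_mem_support_of_mem_edges hmem2
      have : (Walk.cons hw q2).IsPath := by rw [← hq2]; exact hq.reverse
      rw [Walk.cons_isPath_iff] at this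
      exact this.2 hzsupp
  refine ⟨n, Walk.cons hzn.symm r, ?_, ?_, z, ?_, hzv, hzS⟩
  · rw [Walk.cons_isCycle_iff]
    exact ⟨hrp, hedge⟩
  · intro u hu
    simp only [Walk.support_cons, List.mem_cons] at hu
    rcases hu with rfl | hu
    · exact hclosed z hzS hzv hzn
    · have := q.reverse.support_takeUntil_subset hnsupp hu
      rw [Walk.support_reverse, List.mem_reverse] at this
      exact hqs u this
  · rw [Walk.support_cons]
    exact List.mem_cons_of_mem _ r.start_mem_support

end Aux

/-- If a graph `G` that equals its own 2-core (every vertex has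
degree at least 2) has a cycle basis all of whose cycles contain the edge
`{t1,t2}`, then `G` is 2-vertex-connected. -/
theorem stmt1 {V : Type*} [Fintype V] (G : SimpleGraph V) (t1 t2 : V)
    (he : G.Adj t1 t2) (hcore : ∀ v : V, 2 ≤ (G.neighborSet v).ncard)
    (B : Set G.Subgraph) (hB : IsCycleBasis B)
    (hroot : ∀ C ∈ B, s(t1, t2) ∈ C.edgeSet) :
    TwoConnected G := by
  classical
  have hcard : 3 ≤ Nat.card V := by
    obtain ⟨n1, hn1, n2, hn2, h12⟩ := (Set.one_lt_ncard (Set.toFinite _)).1 (hcore t1)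
    have h3 : ({t1, n1, n2} : Set V).ncard = 3 := by
      rw [Set.ncard_insert_of_notMem (by
          simp only [Set.mem_insert_iff, Set.mem_singleton_iff]
          push_neg
          exact ⟨(hn1 : G.Adj t1 n1).ne, (hn2 : G.Adj t1 n2).ne⟩) (Set.toFinite _),
        Set.ncard_insert_of_notMem (by simpa using h12) (Set.toFinite _),
        Set.ncard_singleton]
    have hle : ({t1, n1, n2} : Set V).ncard ≤ Nat.card V := by
      rw [← Set.ncard_univ]
      exact Set.ncard_le_ncard (Set.subset_univ _) (Set.toFinite _)
    omega
  refine ⟨hcard, fun v => ?_⟩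
  set W : Set V := {v}ᶜ with hWdef
  set t : V := if t1 = v then t2 else t1 with htdef
  have htv : t ≠ v := by
    by_cases h : t1 = v
    · simp only [htdef, h, if_true]
      rintro rfl; exact he.ne h
    · simpa [htdef, h] using h
  have htW : t ∈ W := htv
  have ht12 : t = t1 ∨ t = t2 := by
    by_cases h : t1 = v <;> simp [htdef, h]
  rw [connected_iff]
  refine ⟨?_, ⟨⟨t, htW⟩⟩⟩
  by_contra hpc
  simp only [SimpleGraph.Preconnected, not_forall] at hpc
  obtain ⟨aW, bW, hab⟩ := hpc
  set tW : ↥W := ⟨t, htW⟩ with htW'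
  set A : Set V := {x | ∃ h : x ∈ W, (G.induce W).Reachable tW ⟨x, h⟩} with hAdef
  set Bs : Set V := {x | x ∈ W ∧ x ∉ A} with hBsdef
  have htA : t ∈ A := ⟨htW, Reachable.refl _⟩
  have hindadj : ∀ (x y : V) (hx : x ∈ W) (hy : y ∈ W), G.Adj x y →
      (G.induce W).Adj ⟨x, hx⟩ ⟨y, hy⟩ := by
    intro x y hx hy h
    exact h
  have hclosure : ∀ x ∈ A, ∀ y, G.Adj x y → y ≠ v → y ∈ A := by
    rintro x ⟨hxW, hxr⟩ y hxy hyv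
    have hyW : y ∈ W := hyv
    exact ⟨hyW, hxr.trans (hindadj x y hxW hyW hxy).reachable⟩
  have hBclosure : ∀ x ∈ Bs, G.neighborSet x ⊆ Bs ∪ {v} := by
    rintro x ⟨hxW, hxA⟩ n hn
    by_cases hnv : n = v
    · exact Or.inr hnv
    · left
      refine ⟨hnv, fun hnA => hxA ?_⟩
      exact hclosure n hnA x (hn : G.Adj x n).symm (hxW : x ≠ v)
  have hmemA : ∀ (u : ↥W), (u : V) ∈ A ↔ (G.induce W).Reachable tW u := by
    intro u
    constructor
    · rintro ⟨h, hr⟩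
      rwa [show (⟨(u : V), h⟩ : ↥W) = u from Subtype.ext rfl] at hr
    · intro hr
      exact ⟨u.2, by rwa [show (⟨(u : V), u.2⟩ : ↥W) = u from Subtype.ext rfl]⟩
  have hBsne : Bs.Nonempty := by
    by_cases h : (aW : V) ∈ A
    · refine ⟨bW, bW.2, fun hbA => hab ?_⟩
      exact ((hmemA aW).1 h).symm.trans ((hmemA bW).1 hbA)
    · exact ⟨aW, aW.2, h⟩
  have hAB : ∀ x, x ∈ A → x ∉ Bs := fun x hx hxB => hxB.2 hx
  -- the key claim: every basis cycle avoids Bs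
  have hL2 : ∀ C ∈ B, C.verts ∩ Bs = ∅ := by
    intro C hC
    by_contra hne
    obtain ⟨b1, hb1v, hb1B⟩ : ∃ b1, b1 ∈ C.verts ∧ b1 ∈ Bs := by
      obtain ⟨b1, h⟩ := Set.nonempty_iff_ne_empty.2 hne
      exact ⟨b1, h.1, h.2⟩
    have hCc := hB.1 C hC
    have hadj12 : C.Adj t1 t2 := Subgraph.mem_edgeSet.1 (hroot C hC)
    have htC : t ∈ C.verts := by
      rcases ht12 with h | h
      · rw [h]; exact hadj12.fst_mem
      · rw [h]; exact hadj12.snd_mem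
    set Q : Set V := C.verts ∩ Bs with hQdef
    set Qf : Finset V := (Set.toFinite Q).toFinset with hQf
    set EF : Finset (Sym2 V) := (Set.toFinite C.edgeSet).toFinset with hEF
    set D : Finset (Sym2 V) := EF.filter (fun e => (Qf.filter (fun x => x ∈ e)).card = 1)
      with hDdef
    have hpar : 2 ∣ D.card := aux_parity C hCc.2.2 Q Set.inter_subset_left
    have hvQ : v ∉ Q := fun hv => (hv.2.1 : v ∈ W) rfl
    have hDstruct : ∀ e ∈ D, v ∈ e ∧ ∃ q ∈ Q, q ∈ e := by
      intro e he
      rw [hDdef, Finset.mem_filter] at he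
      obtain ⟨heE, hcard1⟩ := he
      rw [hEF, Set.Finite.mem_toFinset] at heE
      induction e with
      | _ a b =>
        have hCab : C.Adj a b := Subgraph.mem_edgeSet.1 heE
        have hone : (a ∈ Q ∧ b ∉ Q) ∨ (b ∈ Q ∧ a ∉ Q) := by
          by_cases ha : a ∈ Q <;> by_cases hb : b ∈ Q
          · exfalso
            rw [aux_two_endpoints hCab Qf ((Set.Finite.mem_toFinset _).2 ha)
              ((Set.Finite.mem_toFinset _).2 hb)] at hcard1
            omega
          · exact Or.inl ⟨ha, hb⟩
          · exact Or.inr ⟨hb, ha⟩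
          · exfalso
            have : Qf.filter (fun x => x ∈ s(a, b)) = ∅ := by
              rw [Finset.filter_eq_empty_iff]
              intro z hz
              rw [hQf, Set.Finite.mem_toFinset] at hz
              simp only [Sym2.mem_iff]
              rintro (rfl | rfl) <;> [exact ha hz; exact hb hz]
            rw [this] at hcard1
            simp at hcard1
        rcases hone with ⟨haQ, hbQ⟩ | ⟨hbQ, haQ⟩
        · have hbv : b = v := by
            have hbB : b ∈ Bs ∪ {v} := hBclosure a haQ.2 (C.adj_sub hCab)
            rcases hbB with h | h
            · exact absurd ⟨hCab.snd_mem, h⟩ hbQ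
            · exact h
          exact ⟨by rw [hbv]; simp, a, haQ, by simp⟩
        · have hav : a = v := by
            have haB : a ∈ Bs ∪ {v} := hBclosure b hbQ.2 (C.adj_sub hCab).symm
            rcases haB with h | h
            · exact absurd ⟨hCab.fst_mem, h⟩ haQ
            · exact h
          exact ⟨by rw [hav]; simp, b, hbQ, by simp⟩
    set Dv : Finset (Sym2 V) := EF.filter (fun e => v ∈ e) with hDv
    have hDsub : D ⊆ Dv := by
      intro e he
      rw [hDv, Finset.mem_filter]
      exact ⟨Finset.mem_of_mem_filter e he, (hDstruct e he).1⟩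
    have hDvcard : Dv.card ≤ 2 := by
      rw [hDv, aux_incidence]
      by_cases hv : v ∈ C.verts
      · rw [hCc.2.2 v hv]
      · have : C.neighborSet v = ∅ := by
          ext w
          simp only [Subgraph.mem_neighborSet, Set.mem_empty_iff_false, iff_false]
          intro hadj
          exact hv hadj.fst_mem
        rw [this]
        simp
    have hDne : 1 ≤ D.card := by
      obtain ⟨x, y, hxy, hxB, hyB⟩ :=
        aux_subgraph_cross hCc.2.1 (X := Bs) hb1v htC hb1B (hAB t htA)
      have hxQ : x ∈ Q := ⟨hxy.fst_mem, hxB⟩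
      have hyQ : y ∉ Q := fun h => hyB h.2
      have hmemD : s(x, y) ∈ D := by
        rw [hDdef, Finset.mem_filter]
        refine ⟨by rw [hEF, Set.Finite.mem_toFinset]; exact Subgraph.mem_edgeSet.2 hxy, ?_⟩
        have : Qf.filter (fun z => z ∈ s(x, y)) = {x} := by
          ext u
          simp only [Finset.mem_filter, Finset.mem_singleton, Sym2.mem_iff, hQf,
            Set.Finite.mem_toFinset]
          constructor
          · rintro ⟨hu, rfl | rfl⟩
            · rfl
            · exact absurd hu hyQ
          · rintro rfl
            exact ⟨hxQ, Or.inl rfl⟩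
        rw [this]
        simp
      exact Finset.card_pos.2 ⟨_, hmemD⟩
    have hDeq : D = Dv := by
      apply Finset.eq_of_subset_of_card_le hDsub
      have h2 : D.card = 2 := by
        have := Finset.card_le_card hDsub
        omega
      omega
    -- now cut along A
    obtain ⟨x, y, hxy, hxA, hyA⟩ :=
      aux_subgraph_cross hCc.2.1 (X := A) htC hb1v htA hb1B.2
    have hyv : y = v := by
      by_contra hyv
      exact hyA (hclosure x hxA y (C.adj_sub hxy) hyv)
    have hmemDv : s(x, y) ∈ Dv := by
      rw [hDv, Finset.mem_filter]
      exact ⟨by rw [hEF, Set.Finite.mem_toFinset]; exact Subgraph.mem_edgeSet.2 hxy,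
        by rw [hyv]; simp⟩
    rw [← hDeq] at hmemDv
    obtain ⟨-, q, hqQ, hqe⟩ := hDstruct _ hmemDv
    simp only [Sym2.mem_iff] at hqe
    rcases hqe with rfl | rfl
    · exact hAB q hxA hqQ.2
    · rw [hyv] at hqQ
      exact hvQ hqQ
  -- construct a cycle inside Bs ∪ {v}
  obtain ⟨b1, hb1⟩ := hBsne
  have hb1v : b1 ≠ v := hb1.1
  obtain ⟨n, c, hcyc, hcS, z, hzc, hzv2, hzS2⟩ :=
    aux_exists_cycle (G := G) (Bs ∪ {v}) v
      (fun x _ _ => hcore x)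
      (fun x hx hxv => by
        rcases hx with hx | hx
        · exact hBclosure x hx
        · exact absurd hx hxv)
      b1 (Or.inl hb1) hb1v
  have hC0 := aux_cycle_toSubgraph hcyc
  set C0 := c.toSubgraph with hC0def
  have hzB : z ∈ Bs := by
    rcases hzS2 with h | h
    · exact h
    · exact absurd h hzv2
  have hzC0 : z ∈ C0.verts := (Walk.mem_verts_toSubgraph c).2 hzc
  have hnb : (C0.neighborSet z).Nonempty := by
    apply Set.nonempty_of_ncard_ne_zero
    rw [hC0.2.2 z hzC0]
    omega
  obtain ⟨n0, hn0⟩ := hnb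
  have hf : s(z, n0) ∈ C0.edgeSet := Subgraph.mem_edgeSet.2 hn0
  have hmem : edgeVec C0 ∈ cycleSpace G := Submodule.subset_span ⟨C0, hC0, rfl⟩
  rw [← hB.2.2] at hmem
  have hker : edgeVec '' B ⊆
      (LinearMap.ker (LinearMap.proj (R := ZMod 2) (φ := fun _ : Sym2 V => ZMod 2)
        s(z, n0)) : Set (Sym2 V → ZMod 2)) := by
    rintro _ ⟨C, hC, rfl⟩
    simp only [SetLike.mem_coe, LinearMap.mem_ker, LinearMap.proj_apply]
    rw [edgeVec, if_neg]
    intro habs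
    have hzC : z ∈ C.verts := (Subgraph.mem_edgeSet.1 habs).fst_mem
    have := hL2 C hC
    rw [Set.eq_empty_iff_forall_notMem] at this
    exact this z ⟨hzC, hzB⟩
  have hker2 := Submodule.span_le.2 hker hmem
  simp only [LinearMap.mem_ker, LinearMap.proj_apply] at hker2
  rw [edgeVec, if_pos hf] at hker2
  exact one_ne_zero hker2
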